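/- Let $R>0$, $a \in (0,R)$, $\beta>0$, $n=1$, $\alpha^2 = R^2-a^2$, and let $\varphi(x) = ((x-a)^2+\alpha^2)^{-\beta R}$ on $[-R,R]$. Define $f(t) = 2\beta R\, t[(1 - 2(\beta R+1))t^{1/(\beta R)} + 2(\beta R+1)\alpha^2 t^{2/(\beta R)}]$. Then $\varphi$ is a positive solution of $-\varphi'' = f(\varphi)$ on $(-R,R)$ with Robin conditions $-\varphi'(-R)+\beta\varphi(-R)=0$, $\varphi'(R)+\beta\varphi(R)=0$, and $f \circ \varphi$ changes sign on $[-R,R]$. -/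

import Mathlib

open Real Set

theorem stmt_12 (R a β : ℝ) (hR : 0 < R) (ha : 0 < a) (haR : a < R) (hβ : 0 < β)
    (α2 : ℝ) (hα2 : α2 = R ^ 2 - a ^ 2)
    (φ : ℝ → ℝ) (hφ : ∀ x : ℝ, φ x = ((x - a) ^ 2 + α2) ^ (-(β * R)))
    (f : ℝ → ℝ)
    (hf : ∀ t : ℝ, f t = 2 * β * R * t *
      ((1 - 2 * (β * R + 1)) * t ^ (1 / (β * R)) +
        2 * (β * R + 1) * α2 * t ^ (2 / (β * R)))) :
    (∀ x ∈ Icc (-R) R, 0 < φ x) ∧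
      (∀ x ∈ Ioo (-R) R, -(deriv (deriv φ) x) = f (φ x)) ∧
      (-(deriv φ (-R)) + β * φ (-R) = 0) ∧
      (deriv φ R + β * φ R = 0) ∧
      (∃ x ∈ Icc (-R) R, 0 < f (φ x)) ∧ (∃ x ∈ Icc (-R) R, f (φ x) < 0) := by
  have hc : 0 < β * R := by positivity
  have hα2pos : 0 < α2 := by rw [hα2]; nlinarith
  set c := β * R with hcdef
  have hu : ∀ x : ℝ, 0 < (x - a) ^ 2 + α2 := fun x => by positivity
  -- derivative of inner function
  have hud : ∀ x : ℝ, HasDerivAt (fun x : ℝ => (x - a) ^ 2 + α2) (2 * (x - a)) x := by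
    intro x
    have h1 : HasDerivAt (fun x : ℝ => x - a) 1 x := (hasDerivAt_id x).sub_const a
    simpa using (h1.pow 2).add_const α2
  -- first derivative of φ
  have hφd : ∀ x : ℝ,
      HasDerivAt φ (-c * ((x - a) ^ 2 + α2) ^ (-c - 1) * (2 * (x - a))) x := by
    intro x
    have h := (Real.hasDerivAt_rpow_const (p := -c) (Or.inl (hu x).ne')).comp x (h := fun x : ℝ => (x - a) ^ 2 + α2) (hud x)
    have hφeq : φ = fun x : ℝ => ((x - a) ^ 2 + α2) ^ (-c) := funext hφ
    rw [hφeq]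
    exact h
  have hderivφ : deriv φ = fun x : ℝ =>
      -c * ((x - a) ^ 2 + α2) ^ (-c - 1) * (2 * (x - a)) :=
    funext fun x => (hφd x).deriv
  -- second derivative
  have hφdd : ∀ x : ℝ, deriv (deriv φ) x =
      (-c * (((-c - 1) * ((x - a) ^ 2 + α2) ^ (-c - 1 - 1)) * (2 * (x - a)))) * (2 * (x - a))
        + (-c * ((x - a) ^ 2 + α2) ^ (-c - 1)) * 2 := by
    intro x
    rw [hderivφ]
    have h1 : HasDerivAt (fun x : ℝ => ((x - a) ^ 2 + α2) ^ (-c - 1))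
        (((-c - 1) * ((x - a) ^ 2 + α2) ^ (-c - 1 - 1)) * (2 * (x - a))) x :=
      (Real.hasDerivAt_rpow_const (p := -c - 1) (Or.inl (hu x).ne')).comp x (h := fun x : ℝ => (x - a) ^ 2 + α2) (hud x)
    have hA := h1.const_mul (-c)
    have hB : HasDerivAt (fun x : ℝ => 2 * (x - a)) 2 x := by
      simpa using ((hasDerivAt_id x).sub_const a).const_mul 2
    have := hA.mul hB
    exact this.deriv
  -- f composed with φ, general formula
  have hfφ : ∀ x : ℝ, f (φ x) =
      2 * c * ((x - a) ^ 2 + α2) ^ (-c) *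
        ((1 - 2 * (c + 1)) * ((x - a) ^ 2 + α2)⁻¹ +
          2 * (c + 1) * α2 * (((x - a) ^ 2 + α2)⁻¹ * ((x - a) ^ 2 + α2)⁻¹)) := by
    intro x
    have hv := hu x
    have h1 : (((x - a) ^ 2 + α2) ^ (-c)) ^ (1 / c) = ((x - a) ^ 2 + α2)⁻¹ := by
      rw [← Real.rpow_mul hv.le, show -c * (1 / c) = -1 by field_simp, Real.rpow_neg_one]
    have h2 : (((x - a) ^ 2 + α2) ^ (-c)) ^ (2 / c) =
        ((x - a) ^ 2 + α2)⁻¹ * ((x - a) ^ 2 + α2)⁻¹ := by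
      rw [← Real.rpow_mul hv.le, show -c * (2 / c) = -1 + -1 by field_simp; ring,
        Real.rpow_add hv, Real.rpow_neg_one]
    rw [hf, hφ, h1, h2]
    ring
  refine ⟨?_, ?_, ?_, ?_, ?_, ?_⟩
  · intro x _
    rw [hφ]
    exact Real.rpow_pos_of_pos (hu x) _
  · intro x _
    rw [hφdd, hfφ]
    have hv := hu x
    have e1 : ((x - a) ^ 2 + α2) ^ (-c - 1) =
        ((x - a) ^ 2 + α2) ^ (-c) * ((x - a) ^ 2 + α2)⁻¹ := by
      rw [show -c - 1 = -c + -1 by ring, Real.rpow_add hv, Real.rpow_neg_one]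
    have e2 : ((x - a) ^ 2 + α2) ^ (-c - 1 - 1) =
        ((x - a) ^ 2 + α2) ^ (-c) * ((x - a) ^ 2 + α2)⁻¹ * ((x - a) ^ 2 + α2)⁻¹ := by
      rw [show -c - 1 - 1 = (-c + -1) + -1 by ring, Real.rpow_add hv, Real.rpow_add hv,
        Real.rpow_neg_one]
    rw [e1, e2]
    field_simp
    ring
  · rw [hderivφ, hφ]
    have hv := hu (-R)
    have e : ((-R - a) ^ 2 + α2) ^ (-c) = ((-R - a) ^ 2 + α2) ^ (-c - 1) * ((-R - a) ^ 2 + α2) := by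
      rw [show -c = -c - 1 + 1 by ring, Real.rpow_add_one hv.ne']; ring_nf
    rw [e, hα2, hcdef]
    ring
  · rw [hderivφ, hφ]
    have hv := hu R
    have e : ((R - a) ^ 2 + α2) ^ (-c) = ((R - a) ^ 2 + α2) ^ (-c - 1) * ((R - a) ^ 2 + α2) := by
      rw [show -c = -c - 1 + 1 by ring, Real.rpow_add_one hv.ne']; ring_nf
    rw [e, hα2, hcdef]
    ring
  · refine ⟨a, ⟨by linarith, le_of_lt haR⟩, ?_⟩
    rw [hfφ]
    have h : (1 - 2 * (c + 1)) * ((a - a) ^ 2 + α2)⁻¹ +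
        2 * (c + 1) * α2 * (((a - a) ^ 2 + α2)⁻¹ * ((a - a) ^ 2 + α2)⁻¹) = α2⁻¹ := by
      have : (a - a) ^ 2 + α2 = α2 := by ring
      rw [this]
      field_simp
      ring
    rw [h]
    have := Real.rpow_pos_of_pos (hu a) (-c)
    positivity
  · refine ⟨-R, ⟨le_refl _, by linarith⟩, ?_⟩
    rw [hfφ]
    have hv := hu (-R)
    have hfact : 2 * c * ((-R - a) ^ 2 + α2) ^ (-c) *
        ((1 - 2 * (c + 1)) * ((-R - a) ^ 2 + α2)⁻¹ +
          2 * (c + 1) * α2 * (((-R - a) ^ 2 + α2)⁻¹ * ((-R - a) ^ 2 + α2)⁻¹)) =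
        (2 * c * ((-R - a) ^ 2 + α2) ^ (-c) * (((-R - a) ^ 2 + α2)⁻¹ * ((-R - a) ^ 2 + α2)⁻¹)) *
          ((1 - 2 * (c + 1)) * ((-R - a) ^ 2 + α2) + 2 * (c + 1) * α2) := by
      field_simp
    rw [hfact]
    apply mul_neg_of_pos_of_neg
    · have := Real.rpow_pos_of_pos hv (-c)
      positivity
    · rw [hα2, hcdef]
      nlinarith [mul_pos hβ hR, sq_nonneg (R + a), mul_pos (mul_pos hβ hR) (mul_pos ha hR)]
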